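/- Let p < q be natural numbers, x₁, y₁⁽ᵖ⁾, y₁⁽ᑫ⁾ real numbers, and let g : ℝ → ℝ be q-times continuously differentiable. Then the function y defined by y(x) = g(x) + (xᵖ/p!)·(y₁⁽ᵖ⁾ - g⁽ᵖ⁾(x₁)) + (x^{q-p}/q! - x₁^{q-p}/(p!(q-p)!))·xᵖ·(y₁⁽ᑫ⁾ - g⁽ᑫ⁾(x₁)) satisfies y⁽ᵖ⁾(x₁) = y₁⁽ᵖ⁾ and y⁽ᑫ⁾(x₁) = y₁⁽ᑫ⁾, where f⁽ᵏ⁾ denotes the k-th iterated derivative of f. -/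

import Mathlib

private lemma itd_monomial (a : ℝ) (n k : ℕ) :
    iteratedDeriv k (fun x : ℝ => a * x ^ n)
      = fun x => a * (n.descFactorial k : ℝ) * x ^ (n - k) := by
  induction k with
  | zero => simp
  | succ k ih =>
    rw [iteratedDeriv_succ, ih]
    funext x
    rw [deriv_const_mul _ (differentiableAt_pow _), deriv_pow_field, Nat.descFactorial_succ,
      show n - (k + 1) = n - k - 1 from (Nat.sub_sub n k 1).symm]
    push_cast
    ring

private lemma itd_g_add_poly (k : ℕ) (g : ℝ → ℝ) (hg : ContDiff ℝ k g) (a b : ℝ) (m n : ℕ)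
    (x : ℝ) :
    iteratedDeriv k (fun x => g x + (a * x ^ m + b * x ^ n)) x
      = iteratedDeriv k g x
        + (a * (m.descFactorial k : ℝ) * x ^ (m - k)
          + b * (n.descFactorial k : ℝ) * x ^ (n - k)) := by
  have hA : ContDiff ℝ k (fun x : ℝ => a * x ^ m) := (contDiff_id.pow m).const_smul a
  have hB : ContDiff ℝ k (fun x : ℝ => b * x ^ n) := (contDiff_id.pow n).const_smul b
  have hP : ContDiff ℝ k ((fun x : ℝ => a * x ^ m) + fun x : ℝ => b * x ^ n) := hA.add hB
  have h1 : (fun x => g x + (a * x ^ m + b * x ^ n))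
      = g + ((fun x : ℝ => a * x ^ m) + fun x : ℝ => b * x ^ n) := rfl
  rw [h1, ← iteratedDerivWithin_univ,
    iteratedDerivWithin_add (Set.mem_univ x) uniqueDiffOn_univ hg.contDiffWithinAt hP.contDiffWithinAt,
    iteratedDerivWithin_add (Set.mem_univ x) uniqueDiffOn_univ hA.contDiffWithinAt hB.contDiffWithinAt,
    iteratedDerivWithin_univ, iteratedDerivWithin_univ, iteratedDerivWithin_univ,
    itd_monomial, itd_monomial]

theorem two_derivative_monomial_constrained_expression
    (p q : ℕ) (hpq : p < q) (x₁ yp yq : ℝ) (g : ℝ → ℝ) (hg : ContDiff ℝ q g) :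
    (iteratedDeriv p
      (fun x => g x
        + x ^ p / (p.factorial : ℝ) * (yp - iteratedDeriv p g x₁)
        + (x ^ (q - p) / (q.factorial : ℝ)
            - x₁ ^ (q - p) / ((p.factorial : ℝ) * ((q - p).factorial : ℝ))) * x ^ p
            * (yq - iteratedDeriv q g x₁)) x₁ = yp)
    ∧ (iteratedDeriv q
      (fun x => g x
        + x ^ p / (p.factorial : ℝ) * (yp - iteratedDeriv p g x₁)
        + (x ^ (q - p) / (q.factorial : ℝ)
            - x₁ ^ (q - p) / ((p.factorial : ℝ) * ((q - p).factorial : ℝ))) * x ^ p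
            * (yq - iteratedDeriv q g x₁)) x₁ = yq) := by
  set c1 : ℝ := yp - iteratedDeriv p g x₁ with hc1
  set c2 : ℝ := yq - iteratedDeriv q g x₁ with hc2
  set a : ℝ := c1 / (p.factorial : ℝ)
      - x₁ ^ (q - p) / ((p.factorial : ℝ) * ((q - p).factorial : ℝ)) * c2 with ha
  set b : ℝ := c2 / (q.factorial : ℝ) with hb
  have hqp : q - p + p = q := Nat.sub_add_cancel hpq.le
  have heq : (fun x => g x + x ^ p / (p.factorial : ℝ) * c1
        + (x ^ (q - p) / (q.factorial : ℝ)
            - x₁ ^ (q - p) / ((p.factorial : ℝ) * ((q - p).factorial : ℝ))) * x ^ p * c2)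
      = fun x => g x + (a * x ^ p + b * x ^ (q - p + p)) := by
    funext x
    rw [pow_add, ha, hb]
    ring
  simp only [hqp] at heq
  rw [heq]
  have hp0 : (p.factorial : ℝ) ≠ 0 := Nat.cast_ne_zero.mpr p.factorial_ne_zero
  have hq0 : (q.factorial : ℝ) ≠ 0 := Nat.cast_ne_zero.mpr q.factorial_ne_zero
  have hqp0 : ((q - p).factorial : ℝ) ≠ 0 := Nat.cast_ne_zero.mpr (q - p).factorial_ne_zero
  have hdesc : ((q - p).factorial : ℝ) * (q.descFactorial p : ℝ) = (q.factorial : ℝ) := by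
    rw [← Nat.cast_mul, Nat.factorial_mul_descFactorial hpq.le]
  constructor
  · rw [itd_g_add_poly p g (hg.of_le (by exact_mod_cast hpq.le)) a b p q x₁,
      Nat.descFactorial_self, Nat.sub_self, pow_zero]
    have hdf : (q.descFactorial p : ℝ) = (q.factorial : ℝ) / ((q - p).factorial : ℝ) := by
      rw [eq_div_iff hqp0, mul_comm]; exact hdesc
    rw [hdf, ha, hb, hc1, hc2]
    field_simp
    ring
  · rw [itd_g_add_poly q g hg a b p q x₁, Nat.descFactorial_self, Nat.sub_self, pow_zero,
      Nat.descFactorial_eq_zero_iff_lt.mpr hpq]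
    rw [hb, hc2]
    field_simp
    push_cast
    ring
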